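/- Let a ∈ M_n(ℂ). There exist positive semidefinite b, c with b_{ii} ≤ 1, c_{ii} ≤ 1 and [[b, a*],[a, c]] ≥ 0 if and only if there exist a Hilbert space H and vectors ξ₁,…,ξ_n, η₁,…,η_n in the closed unit ball of H with a_{ij} = ⟨ξ_i, η_j⟩ for all i, j. -/

import Mathlib

open scoped ComplexOrder
open scoped MatrixOrder

noncomputable section

lemma gram_posSemidef {m : Type*} [Fintype m] {H : Type*} [NormedAddCommGroup H]
    [InnerProductSpace ℂ H] (w : m → H) :
    (Matrix.of fun i j => (inner ℂ (w i) (w j) : ℂ)).PosSemidef := by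
  rw [Matrix.posSemidef_iff_dotProduct_mulVec]
  constructor
  · ext i j
    simp [Matrix.conjTranspose_apply, inner_conj_symm]
  · intro x
    have h : dotProduct (star x)
        ((Matrix.of fun i j => (inner ℂ (w i) (w j) : ℂ)).mulVec x)
        = inner ℂ (∑ i, x i • w i) (∑ j, x j • w j) := by
      rw [sum_inner]
      simp only [inner_sum, inner_smul_left, inner_smul_right, dotProduct,
        Matrix.mulVec, Matrix.of_apply, Pi.star_apply, Finset.mul_sum]
      refine Finset.sum_congr rfl fun i _ => Finset.sum_congr rfl fun j _ => ?_
      simp only [Complex.star_def]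
      ring
    rw [h, inner_self_eq_norm_sq_to_K]
    positivity

theorem posSemidef_block_iff_gram {n : ℕ} (a : Matrix (Fin n) (Fin n) ℂ) :
    (∃ b c : Matrix (Fin n) (Fin n) ℂ, b.PosSemidef ∧ c.PosSemidef ∧
      (∀ i, Complex.re (b i i) ≤ 1) ∧ (∀ i, Complex.re (c i i) ≤ 1) ∧
      (Matrix.fromBlocks b a.conjTranspose a c).PosSemidef) ↔
    (∃ (H : Type) (_ : NormedAddCommGroup H) (_ : InnerProductSpace ℂ H)
      (ξ η : Fin n → H), (∀ i, ‖ξ i‖ ≤ 1) ∧ (∀ i, ‖η i‖ ≤ 1) ∧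
      ∀ i j, a i j = inner ℂ (ξ i) (η j)) := by
  constructor
  · rintro ⟨b, c, hb, hc, hb1, hc1, hM⟩
    set M := Matrix.fromBlocks b a.conjTranspose a c with hMdef
    set N := CFC.sqrt M with hN
    have hNH : N.conjTranspose = N := (Matrix.nonneg_iff_posSemidef.mp (CFC.sqrt_nonneg M)).1
    have hNN : N * N = M := CFC.sqrt_mul_sqrt_self M hM.nonneg
    set vec : (Fin n ⊕ Fin n) → EuclideanSpace ℂ (Fin n ⊕ Fin n) :=
      fun p => WithLp.toLp 2 (fun k => N k p) with hvec
    have key : ∀ p q : Fin n ⊕ Fin n, (inner ℂ (vec p) (vec q) : ℂ) = M p q := by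
      intro p q
      rw [← hNN, Matrix.mul_apply]
      simp only [PiLp.inner_apply, RCLike.inner_apply, hvec]
      refine Finset.sum_congr rfl fun k _ => ?_
      have hh : N p k = star (N k p) := by
        conv_lhs => rw [← hNH]
        simp [Matrix.conjTranspose_apply]
      rw [hh, RCLike.star_def, mul_comm]
    have keyn : ∀ p : Fin n ⊕ Fin n, ‖vec p‖ ^ 2 = Complex.re (M p p) := by
      intro p
      have h1 := key p p
      rw [inner_self_eq_norm_sq_to_K] at h1
      have := congrArg Complex.re h1
      exact_mod_cast this
    refine ⟨EuclideanSpace ℂ (Fin n ⊕ Fin n), inferInstance, inferInstance,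
      fun i => vec (Sum.inr i), fun j => vec (Sum.inl j), ?_, ?_, ?_⟩
    · intro i
      have h2 := keyn (Sum.inr i)
      rw [hMdef, Matrix.fromBlocks_apply₂₂] at h2
      nlinarith [norm_nonneg (vec (Sum.inr i)), hc1 i]
    · intro i
      have h2 := keyn (Sum.inl i)
      rw [hMdef, Matrix.fromBlocks_apply₁₁] at h2
      nlinarith [norm_nonneg (vec (Sum.inl i)), hb1 i]
    · intro i j
      rw [key (Sum.inr i) (Sum.inl j), hMdef, Matrix.fromBlocks_apply₂₁]
  · rintro ⟨H, _, _, ξ, η, hξ, hη, ha⟩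
    refine ⟨Matrix.of (fun i j => (inner ℂ (η i) (η j) : ℂ)),
      Matrix.of (fun i j => (inner ℂ (ξ i) (ξ j) : ℂ)),
      gram_posSemidef η, gram_posSemidef ξ, ?_, ?_, ?_⟩
    · intro i
      have h2 : Complex.re (inner ℂ (η i) (η i) : ℂ) = ‖η i‖ ^ 2 := by
        rw [inner_self_eq_norm_sq_to_K]; norm_cast
      simp only [Matrix.of_apply]
      rw [h2]
      nlinarith [norm_nonneg (η i), hη i]
    · intro i
      have h2 : Complex.re (inner ℂ (ξ i) (ξ i) : ℂ) = ‖ξ i‖ ^ 2 := by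
        rw [inner_self_eq_norm_sq_to_K]; norm_cast
      simp only [Matrix.of_apply]
      rw [h2]
      nlinarith [norm_nonneg (ξ i), hξ i]
    · have heq : Matrix.fromBlocks (Matrix.of (fun i j => (inner ℂ (η i) (η j) : ℂ)))
          a.conjTranspose a (Matrix.of (fun i j => (inner ℂ (ξ i) (ξ j) : ℂ)))
          = Matrix.of (fun p q : Fin n ⊕ Fin n =>
              (inner ℂ (Sum.elim η ξ p) (Sum.elim η ξ q) : ℂ)) := by
        ext p q
        cases p with
        | inl i => cases q with
          | inl j => simp
          | inr j =>
            simp only [Matrix.fromBlocks_apply₁₂, Matrix.of_apply, Sum.elim_inl,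
              Sum.elim_inr, Matrix.conjTranspose_apply, ha j i]
            rw [RCLike.star_def, inner_conj_symm]
        | inr i => cases q with
          | inl j => simp [ha i j]
          | inr j => simp
      rw [heq]
      exact gram_posSemidef _
end
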